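/- Fix n ≥ 1, T₀ > 0, p ∈ (1, p_c(n)), A > 0, and H ∈ 𝒜_sub(A) defined on [0, 𝒯_H). Define sequences by C₁ = A/8, q₁ = 2, T₁ = max{1, T₀}, and for k ≥ 1: q_{k+1} = p(q_k − (n+3)/2) + (n+5)/2, T_{k+1} = 2^{1/(q_{k+1}−1) + 1/q_{k+1}} (T_k + 1) − 1, C_{k+1} = C_k^p / (4 b₀ b₁ p^{2k}). Then for every k ≥ 1 and every t ∈ [T_k, 𝒯_H), one has H(t) ≥ C_k (t+1)^{q_k}. -/

import Mathlib

open Set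

/-- One-sided first derivative on `[0, ∞)`. -/
noncomputable def Hd (H : ℝ → ℝ) : ℝ → ℝ := derivWithin H (Set.Ici 0)

/-- One-sided second derivative on `[0, ∞)`. -/
noncomputable def Hdd (H : ℝ → ℝ) : ℝ → ℝ := derivWithin (Hd H) (Set.Ici 0)

/-- `H ∈ 𝒜_sub(A)` with (possibly infinite) existence time `S = 𝒯_H`:
`H` is `C²` on `[0, S)`, `H(0) = H'(0) = 0`, `H''(t) ≥ A` on `[0, S)`, and
`H''(t) ≥ (t+1)^{-(n+3)p/2 + (n+1)/2} H(t)^p` on `[T₀, S)`. -/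
def MemAsub (n : ℕ) (p T₀ A : ℝ) (H : ℝ → ℝ) (S : EReal) : Prop :=
  0 < S ∧
  ContDiffOn ℝ 2 H {t : ℝ | 0 ≤ t ∧ (t : EReal) < S} ∧
  H 0 = 0 ∧ Hd H 0 = 0 ∧
  (∀ t : ℝ, 0 ≤ t → (t : EReal) < S → A ≤ Hdd H t) ∧
  (∀ t : ℝ, T₀ ≤ t → (t : EReal) < S →
    (t + 1) ^ (-(((n : ℝ) + 3) * p / 2) + ((n : ℝ) + 1) / 2) * H t ^ p ≤ Hdd H t)

/-- The constant `b₀`. -/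
noncomputable def bb0 (n : ℕ) (p : ℝ) : ℝ :=
  1 / (p - 1) - ((n : ℝ) - 1) / 2 + max 0 (((n : ℝ) + 3) / 2 - 1 / (p - 1)) * p⁻¹

/-- The constant `b₁`. -/
noncomputable def bb1 (n : ℕ) (p : ℝ) : ℝ :=
  1 / (p - 1) - ((n : ℝ) - 1) / 2 + max 0 (((n : ℝ) + 1) / 2 - 1 / (p - 1)) * p⁻¹

set_option maxHeartbeats 1000000

lemma hasDerivAt_shift_rpow (r s : ℝ) (hs : 0 < s + 1) :
    HasDerivAt (fun x : ℝ => (x + 1) ^ r) (r * (s + 1) ^ (r - 1)) s := by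
  have h1 : HasDerivAt (fun x : ℝ => x + 1) 1 s := (hasDerivAt_id s).add_const 1
  have h2 := Real.hasDerivAt_rpow_const (x := s + 1) (p := r) (Or.inl hs.ne')
  have h3 := h1.rpow_const (p := r) (Or.inl hs.ne')
  rw [one_mul] at h3
  exact h3

lemma compare (H : ℝ → ℝ) (t₀ : ℝ) (ht₀ : 0 < t₀)
    (hC2 : ContDiffOn ℝ 2 H (Icc 0 t₀))
    (φ φ' φ'' : ℝ → ℝ)
    (hφ : ∀ s ∈ Icc (0:ℝ) t₀, HasDerivAt φ (φ' s) s)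
    (hφ' : ∀ s ∈ Icc (0:ℝ) t₀, HasDerivAt φ' (φ'' s) s)
    (a b : ℝ) (ha : 0 ≤ a) (hab : a ≤ b) (hb : b ≤ t₀) (hat : a < t₀)
    (hH0 : φ a ≤ H a) (hH1 : φ' a ≤ Hd H a)
    (hdd : ∀ s ∈ Ioo a b, φ'' s ≤ Hdd H s) :
    (∀ s ∈ Icc a b, φ s ≤ H s) ∧ (∀ s ∈ Icc a b, s < t₀ → φ' s ≤ Hd H s) := by
  rcases eq_or_lt_of_le hab with rfl | hab'
  · refine ⟨?_, ?_⟩ <;> intro s hs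
    · obtain rfl : s = a := le_antisymm hs.2 hs.1
      exact hH0
    · obtain rfl : s = a := le_antisymm hs.2 hs.1
      exact fun _ => hH1
  set U := Icc (0:ℝ) t₀ with hUdef
  have hU : UniqueDiffOn ℝ U := uniqueDiffOn_Icc ht₀
  have hHd1 : DifferentiableOn ℝ H U := hC2.differentiableOn (by norm_num)
  set G := derivWithin H U with hGdef
  have hG1 : ContDiffOn ℝ 1 G U := hC2.derivWithin hU (by norm_num)
  have hGd : DifferentiableOn ℝ G U := hG1.differentiableOn (by norm_num)
  have hGeq : ∀ s ∈ Ico (0:ℝ) t₀, Hd H s = G s := by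
    intro s hs
    have hset : Ici (0:ℝ) =ᶠ[nhds s] U := by
      rw [Filter.eventuallyEq_set]
      filter_upwards [Iio_mem_nhds hs.2] with x hx
      simp only [hUdef, mem_Ici, mem_Icc]
      exact ⟨fun h => ⟨h, hx.le⟩, fun h => h.1⟩
    exact derivWithin_congr_set hset
  have hsub : Icc a b ⊆ U := Icc_subset_Icc ha hb
  have hsub' : Ioo a b ⊆ Ioo 0 t₀ := Ioo_subset_Ioo ha hb
  have hHdd : ∀ s ∈ Ioo (0:ℝ) t₀, HasDerivAt G (Hdd H s) s := by
    intro s hs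
    have hUn : U ∈ nhds s := Icc_mem_nhds hs.1 hs.2
    have hda : DifferentiableAt ℝ G s := (hGd s ⟨hs.1.le, hs.2.le⟩).differentiableAt hUn
    have hev : Hd H =ᶠ[nhds s] G := by
      filter_upwards [Ioo_mem_nhds hs.1 hs.2] with x hx
      exact hGeq x ⟨hx.1.le, hx.2⟩
    have h1 : Hdd H s = deriv G s := by
      have e1 : derivWithin (Hd H) (Ici 0) s = derivWithin G (Ici 0) s :=
        (hev.filter_mono nhdsWithin_le_nhds).derivWithin_eq (hGeq s ⟨hs.1.le, hs.2⟩)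
      have e2 : derivWithin G (Ici 0) s = deriv G s :=
        derivWithin_of_mem_nhds (Ici_mem_nhds hs.1)
      rw [Hdd, e1, e2]
    exact h1 ▸ hda.hasDerivAt
  have hHG : ∀ s ∈ Ioo (0:ℝ) t₀, HasDerivAt H (G s) s := by
    intro s hs
    have hUn : U ∈ nhds s := Icc_mem_nhds hs.1 hs.2
    have hda : DifferentiableAt ℝ H s := (hHd1 s ⟨hs.1.le, hs.2.le⟩).differentiableAt hUn
    have : G s = deriv H s := derivWithin_of_mem_nhds hUn
    exact this ▸ hda.hasDerivAt
  have hmono1 : MonotoneOn (fun s => G s - φ' s) (Icc a b) := by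
    apply monotoneOn_of_deriv_nonneg (convex_Icc a b)
    · exact (hG1.continuousOn.mono hsub).sub
        (fun s hs => (hφ' s (hsub hs)).continuousAt.continuousWithinAt)
    · rw [interior_Icc]
      intro x hx
      exact (((hHdd x (hsub' hx)).sub (hφ' x (hsub (Ioo_subset_Icc_self hx)))).differentiableAt).differentiableWithinAt
    · rw [interior_Icc]
      intro x hx
      rw [HasDerivAt.deriv (f := fun s => G s - φ' s) ((hHdd x (hsub' hx)).sub (hφ' x (hsub (Ioo_subset_Icc_self hx))))]
      exact sub_nonneg.2 (hdd x hx)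
  have hGa : Hd H a = G a := hGeq a ⟨ha, hat⟩
  have hF₁ : ∀ s ∈ Icc a b, φ' s ≤ G s := by
    intro s hs
    have h := hmono1 (left_mem_Icc.2 hab) hs hs.1
    simp only at h
    have : 0 ≤ G a - φ' a := by rw [← hGa]; linarith
    linarith
  have hmono2 : MonotoneOn (fun s => H s - φ s) (Icc a b) := by
    apply monotoneOn_of_deriv_nonneg (convex_Icc a b)
    · exact (hC2.continuousOn.mono hsub).sub
        (fun s hs => (hφ s (hsub hs)).continuousAt.continuousWithinAt)
    · rw [interior_Icc]
      intro x hx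
      exact (((hHG x (hsub' hx)).sub (hφ x (hsub (Ioo_subset_Icc_self hx)))).differentiableAt).differentiableWithinAt
    · rw [interior_Icc]
      intro x hx
      rw [HasDerivAt.deriv (f := fun s => H s - φ s) ((hHG x (hsub' hx)).sub (hφ x (hsub (Ioo_subset_Icc_self hx))))]
      exact sub_nonneg.2 (hF₁ x (Ioo_subset_Icc_self hx))
  refine ⟨?_, ?_⟩
  · intro s hs
    have h := hmono2 (left_mem_Icc.2 hab) hs hs.1
    simp only at h
    linarith
  · intro s hs hst
    rw [hGeq s ⟨ha.trans hs.1, hst⟩]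
    exact hF₁ s hs

/-- Iteration claim in the subcritical case: with `C₁ = A/8`, `q₁ = 2`, `T₁ = max {1, T₀}` and
the stated recursions, every `H ∈ 𝒜_sub(A)` satisfies `H(t) ≥ C_k (t+1)^{q_k}` for
`t ∈ [T_k, 𝒯_H)`, `k ≥ 1`. -/
theorem sub_iteration_claim (n : ℕ) (hn : 1 ≤ n) (p T₀ A : ℝ) (hp : 1 < p)
    (hpc : p * ((n : ℝ) - 1) < (n : ℝ) + 1) (hT₀ : 0 < T₀) (hA : 0 < A)
    (H : ℝ → ℝ) (S : EReal) (hH : MemAsub n p T₀ A H S)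
    (C q T : ℕ → ℝ)
    (hC1 : C 1 = A / 8) (hq1 : q 1 = 2) (hT1 : T 1 = max 1 T₀)
    (hqrec : ∀ k : ℕ, 1 ≤ k → q (k + 1) = p * (q k - ((n : ℝ) + 3) / 2) + ((n : ℝ) + 5) / 2)
    (hTrec : ∀ k : ℕ, 1 ≤ k →
      T (k + 1) = (2 : ℝ) ^ (1 / (q (k + 1) - 1) + 1 / q (k + 1)) * (T k + 1) - 1)
    (hCrec : ∀ k : ℕ, 1 ≤ k → C (k + 1) = C k ^ p / (4 * bb0 n p * bb1 n p * p ^ (2 * k))) :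
    ∀ k : ℕ, 1 ≤ k → ∀ t : ℝ, T k ≤ t → (t : EReal) < S →
      C k * (t + 1) ^ (q k) ≤ H t := by
  obtain ⟨hS, hreg, hH00, hHd00, hAle, hPle⟩ := hH
  have hp0 : (0:ℝ) < p := lt_trans one_pos hp
  have hp1 : (0:ℝ) < p - 1 := sub_pos.2 hp
  set qs : ℝ := ((n:ℝ)+3)/2 - 1/(p-1) with hqs
  have hdgt : ((n:ℝ)-1)/2 < 1/(p-1) := by
    rw [lt_div_iff₀ hp1]
    nlinarith
  have h2qs : 0 < 2 - qs := by rw [hqs]; linarith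
  have hmax0 : qs ≤ max 0 qs := le_max_right 0 qs
  have hb0pos : 0 < bb0 n p := by
    have h1 : 0 ≤ max 0 qs * p⁻¹ := mul_nonneg (le_max_left 0 qs) (by positivity)
    rw [bb0, ← hqs]
    linarith
  have hb1pos : 0 < bb1 n p := by
    have h1 : 0 ≤ max 0 (((n:ℝ)+1)/2 - 1/(p-1)) * p⁻¹ :=
      mul_nonneg (le_max_left _ _) (by positivity)
    rw [bb1]
    linarith
  -- explicit formula for q
  have hqf : ∀ k : ℕ, 1 ≤ k → q k = qs + (2 - qs) * p ^ (k - 1) := by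
    intro k hk
    induction k, hk using Nat.le_induction with
    | base => simp [hq1, hqs]
    | succ k hk ih =>
      have hk1 : k + 1 - 1 = (k - 1) + 1 := by omega
      rw [hqrec k hk, ih, hk1, pow_succ, hqs]
      field_simp
      ring
  have hq2 : ∀ k : ℕ, 1 ≤ k → 2 ≤ q k := by
    intro k hk
    have hpk : 1 ≤ p ^ (k-1) := one_le_pow₀ hp.le
    rw [hqf k hk]
    nlinarith
  -- T monotonicity
  have hTge : ∀ k : ℕ, 1 ≤ k → max 1 T₀ ≤ T k := by
    intro k hk
    induction k, hk using Nat.le_induction with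
    | base => exact hT1.ge
    | succ k hk ih =>
      have hq2' := hq2 (k+1) (by omega)
      have he : 0 < 1/(q (k+1) - 1) + 1/(q (k+1)) := by
        have h1 : 0 < q (k+1) - 1 := by linarith
        have h2 : 0 < q (k+1) := by linarith
        positivity
      have h2e : (1:ℝ) < 2 ^ (1/(q (k+1) - 1) + 1/(q (k+1))) :=
        (Real.one_lt_rpow_iff_of_pos two_pos).2 (Or.inl ⟨one_lt_two, he⟩)
      have hTk1 : (1:ℝ) ≤ T k := le_trans (le_max_left _ _) ih
      rw [hTrec k hk]
      nlinarith
  -- positivity of C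
  have hCpos : ∀ k : ℕ, 1 ≤ k → 0 < C k := by
    intro k hk
    induction k, hk using Nat.le_induction with
    | base => rw [hC1]; positivity
    | succ k hk ih =>
      rw [hCrec k hk]
      have h1 : 0 < C k ^ p := Real.rpow_pos_of_pos ih p
      have h2 : 0 < p ^ (2*k) := pow_pos hp0 _
      have : 0 < 4 * bb0 n p * bb1 n p * p ^ (2*k) := by positivity
      positivity
  -- bounds on q (k+1)
  have hqb : ∀ k : ℕ, 1 ≤ k →
      q (k+1) ≤ bb0 n p * p ^ k ∧ q (k+1) - 1 ≤ bb1 n p * p ^ k := by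
    intro k hk
    have hf : q (k+1) = qs + (2 - qs) * p ^ k := by
      rw [hqf (k+1) (by omega)]; simp
    have hpk1 : 1 ≤ p ^ (k-1) := one_le_pow₀ hp.le
    have hpksplit : p ^ k = p ^ (k-1) * p := by
      rw [← pow_succ]; congr 1; omega
    have hinv : p⁻¹ * p ^ k = p ^ (k-1) := by
      rw [hpksplit]; field_simp
    constructor
    · have h1 : qs ≤ max 0 qs * p ^ (k-1) :=
        le_trans hmax0 (le_mul_of_one_le_right (le_max_left 0 qs) hpk1)
      have hb0 : bb0 n p * p ^ k = (2 - qs) * p ^ k + max 0 qs * p ^ (k-1) := by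
        rw [bb0, ← hqs, ← hinv, hqs]; ring
      rw [hf, hb0]; linarith
    · set qs1 : ℝ := ((n:ℝ)+1)/2 - 1/(p-1) with hqs1
      have h1 : qs - 1 ≤ max 0 qs1 * p ^ (k-1) := by
        have : qs - 1 = qs1 := by rw [hqs, hqs1]; ring
        rw [this]
        exact le_trans (le_max_right 0 qs1)
          (le_mul_of_one_le_right (le_max_left 0 qs1) hpk1)
      have hb1 : bb1 n p * p ^ k = (2 - qs) * p ^ k + max 0 qs1 * p ^ (k-1) := by
        rw [bb1, ← hqs1, ← hinv, hqs]; ring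
      rw [hf, hb1]; linarith
  -- main induction
  intro k hk
  induction k, hk using Nat.le_induction with
  | base =>
    intro t ht hts
    have ht1 : (1:ℝ) ≤ t := le_trans (le_max_left _ _) (hT1 ▸ ht)
    have ht0 : (0:ℝ) < t := by linarith
    have hsubU : Icc (0:ℝ) t ⊆ {s : ℝ | 0 ≤ s ∧ (s:EReal) < S} := fun s hs =>
      ⟨hs.1, lt_of_le_of_lt (EReal.coe_le_coe_iff.2 hs.2) hts⟩
    have hC2 : ContDiffOn ℝ 2 H (Icc 0 t) := hreg.mono hsubU
    have hlt : ∀ s ∈ Icc (0:ℝ) t, (s:EReal) < S := fun s hs => (hsubU hs).2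
    have hφ : ∀ s ∈ Icc (0:ℝ) t, HasDerivAt (fun s : ℝ => A/2 * s^2) (A * s) s := by
      intro s _
      have h := (hasDerivAt_pow 2 s).const_mul (A/2)
      refine h.congr_deriv ?_
      push_cast
      ring
    have hφ' : ∀ s ∈ Icc (0:ℝ) t, HasDerivAt (fun s : ℝ => A * s) A s := by
      intro s _
      simpa using (hasDerivAt_id s).const_mul A
    obtain ⟨hc1, _⟩ := compare H t ht0 hC2 _ _ (fun _ => A) hφ hφ'
      0 t le_rfl ht0.le le_rfl ht0
      (by simp [hH00]) (by simp [hHd00])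
      (fun s hs => hAle s hs.1.le (hlt s ⟨hs.1.le, hs.2.le⟩))
    have hmain := hc1 t (right_mem_Icc.2 ht0.le)
    rw [hC1, hq1, show (2:ℝ) = ((2:ℕ):ℝ) by norm_num, Real.rpow_natCast]
    nlinarith [mul_nonneg hA.le (mul_nonneg (sub_nonneg.2 ht1) (show (0:ℝ) ≤ 3*t+1 by linarith))]
  | succ k hk ih =>
    intro t ht hts
    obtain ⟨m, hmdef⟩ : ∃ x : ℝ, x = q (k+1) := ⟨_, rfl⟩
    have hm2 : 2 ≤ m := hmdef ▸ hq2 (k+1) (by omega)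
    have hm1 : (0:ℝ) < m - 1 := by linarith
    have hm0 : (0:ℝ) < m := by linarith
    have hCk : 0 < C k := hCpos k hk
    obtain ⟨K, hKdef⟩ : ∃ x : ℝ, x = C k ^ p := ⟨_, rfl⟩
    have hKpos : 0 < K := hKdef ▸ Real.rpow_pos_of_pos hCk p
    have hTk1 : (1:ℝ) ≤ T k := le_trans (le_max_left _ _) (hTge k hk)
    have hT₀k : T₀ ≤ T k := le_trans (le_max_right _ _) (hTge k hk)
    have hTk1' : (0:ℝ) < T k + 1 := by linarith
    have hTsucc : T (k+1) + 1 = 2 ^ (1/(m-1) + 1/m) * (T k + 1) := by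
      rw [hTrec k hk, hmdef]; ring
    obtain ⟨Tm, hTmdef⟩ : ∃ x : ℝ, x = 2 ^ (1/(m-1)) * (T k + 1) - 1 := ⟨_, rfl⟩
    have hTm1 : Tm + 1 = 2 ^ (1/(m-1)) * (T k + 1) := by rw [hTmdef]; ring
    have h2e1 : (1:ℝ) < 2 ^ (1/(m-1)) :=
      (Real.one_lt_rpow_iff_of_pos two_pos).2 (Or.inl ⟨one_lt_two, by positivity⟩)
    have h2e2 : (1:ℝ) < 2 ^ (1/m) :=
      (Real.one_lt_rpow_iff_of_pos two_pos).2 (Or.inl ⟨one_lt_two, by positivity⟩)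
    have hradd : (2:ℝ) ^ (1/(m-1) + 1/m) = 2 ^ (1/(m-1)) * 2 ^ (1/m) :=
      Real.rpow_add two_pos _ _
    have hTkTm : T k < Tm := by
      have h := mul_lt_mul_of_pos_right h2e1 hTk1'
      rw [one_mul] at h
      linarith [hTm1]
    have hTmT : Tm < T (k+1) := by
      have hpos : (0:ℝ) < 2 ^ (1/(m-1)) * (T k + 1) := by positivity
      have h := mul_lt_mul_of_pos_left h2e2 hpos
      rw [mul_one] at h
      have e : (2:ℝ) ^ (1/(m-1) + 1/m) * (T k + 1)
          = 2 ^ (1/(m-1)) * (T k + 1) * 2 ^ (1/m) := by rw [hradd]; ring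
      linarith [hTsucc, hTm1]
    have htT : T (k+1) ≤ t := ht
    have ht1 : (1:ℝ) ≤ t := by
      have := le_trans (le_max_left 1 T₀) (hTge (k+1) (by omega))
      linarith
    have ht0 : (0:ℝ) < t := by linarith
    have hTmt : Tm < t := lt_of_lt_of_le hTmT htT
    have hTkt : T k < t := lt_trans hTkTm hTmt
    have hsubU : Icc (0:ℝ) t ⊆ {s : ℝ | 0 ≤ s ∧ (s:EReal) < S} := fun s hs =>
      ⟨hs.1, lt_of_le_of_lt (EReal.coe_le_coe_iff.2 hs.2) hts⟩
    have hC2 : ContDiffOn ℝ 2 H (Icc 0 t) := hreg.mono hsubU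
    have hlt : ∀ s : ℝ, 0 ≤ s → s ≤ t → (s:EReal) < S := fun s h1 h2 =>
      (hsubU ⟨h1, h2⟩).2
    -- Stage A : nonnegativity
    obtain ⟨hA1, hA2⟩ := compare H t ht0 hC2 (fun _ => 0) (fun _ => 0) (fun _ => 0)
      (fun s _ => hasDerivAt_const s 0) (fun s _ => hasDerivAt_const s 0)
      0 t le_rfl ht0.le le_rfl ht0 (le_of_eq hH00.symm) (le_of_eq hHd00.symm)
      (fun s hs => le_trans hA.le (hAle s hs.1.le (hlt s hs.1.le hs.2.le)))
    -- Stage B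
    obtain ⟨c1, hc1def⟩ : ∃ x : ℝ, x = K / ((m-1)*m) := ⟨_, rfl⟩
    obtain ⟨c2, hc2def⟩ : ∃ x : ℝ, x = K / (m-1) * (T k + 1) ^ (m-1) := ⟨_, rfl⟩
    obtain ⟨c3, hc3def⟩ : ∃ x : ℝ, x = c1 * (T k + 1) ^ m - c2 * T k := ⟨_, rfl⟩
    have hφB : ∀ s ∈ Icc (0:ℝ) t,
        HasDerivAt (fun s : ℝ => c1 * (s+1) ^ m - c2 * s - c3)
          (K/(m-1) * (s+1) ^ (m-1) - c2) s := by
      intro s hs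
      have hs1 : (0:ℝ) < s + 1 := by linarith [hs.1]
      have h := (((hasDerivAt_shift_rpow m s hs1).const_mul c1).sub
        ((hasDerivAt_id s).const_mul c2)).sub_const c3
      refine h.congr_deriv ?_
      rw [hc1def]
      field_simp
    have hφB' : ∀ s ∈ Icc (0:ℝ) t,
        HasDerivAt (fun s : ℝ => K/(m-1) * (s+1) ^ (m-1) - c2)
          (K * (s+1) ^ (m-2)) s := by
      intro s hs
      have hs1 : (0:ℝ) < s + 1 := by linarith [hs.1]
      have h := ((hasDerivAt_shift_rpow (m-1) s hs1).const_mul (K/(m-1))).sub_const c2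
      refine h.congr_deriv ?_
      rw [show m - 1 - 1 = m - 2 by ring]
      field_simp
    have hddB : ∀ s ∈ Ioo (T k) t, K * (s+1) ^ (m-2) ≤ Hdd H s := by
      intro s hs
      have hsS : (s:EReal) < S := hlt s (by linarith [hs.1]) hs.2.le
      have hs1 : (0:ℝ) < s + 1 := by linarith [hs.1, hTk1]
      have h6 := hPle s (le_trans hT₀k hs.1.le) hsS
      have hIH := ih s hs.1.le hsS
      have hrp : K * (s+1) ^ (q k * p) ≤ H s ^ p := by
        have e1 : K * (s+1) ^ (q k * p) = (C k * (s+1) ^ (q k)) ^ p := by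
          rw [Real.mul_rpow hCk.le (Real.rpow_nonneg hs1.le _),
            Real.rpow_mul hs1.le, hKdef]
        rw [e1]
        exact Real.rpow_le_rpow (by positivity) hIH hp0.le
      have hbpos : (0:ℝ) < (s+1) ^ (-(((n:ℝ)+3)*p/2) + ((n:ℝ)+1)/2) :=
        Real.rpow_pos_of_pos hs1 _
      have h7 : (s+1) ^ (-(((n:ℝ)+3)*p/2) + ((n:ℝ)+1)/2) * (K * (s+1) ^ (q k * p))
          ≤ Hdd H s :=
        le_trans (mul_le_mul_of_nonneg_left hrp hbpos.le) h6
      have hexp : -(((n:ℝ)+3)*p/2) + ((n:ℝ)+1)/2 + q k * p = m - 2 := by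
        rw [hmdef, hqrec k hk]; ring
      calc K * (s+1) ^ (m-2) = (s+1) ^ (-(((n:ℝ)+3)*p/2) + ((n:ℝ)+1)/2)
            * (K * (s+1) ^ (q k * p)) := by
            rw [← hexp, Real.rpow_add hs1]; ring
        _ ≤ Hdd H s := h7
    have hTkIcc : T k ∈ Icc (0:ℝ) t := ⟨by linarith, hTkt.le⟩
    obtain ⟨hB1, hB2⟩ := compare H t ht0 hC2 _ _ _ hφB hφB'
      (T k) t (by linarith) hTkt.le le_rfl (by linarith)
      (by
        show c1 * (T k + 1) ^ m - c2 * (T k) - c3 ≤ H (T k)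
        rw [hc3def]
        have := hA1 (T k) hTkIcc
        linarith)
      (by
        show K/(m-1) * (T k + 1) ^ (m-1) - c2 ≤ Hd H (T k)
        rw [hc2def]
        have := hA2 (T k) hTkIcc hTkt
        linarith)
      hddB
    -- key : (Tm+1)^(m-1) = 2 * (Tk+1)^(m-1)
    have h2pow : ∀ r : ℝ, 0 < r → ((2:ℝ) ^ (1/r)) ^ r = 2 := by
      intro r hr
      rw [← Real.rpow_mul (by norm_num : (0:ℝ) ≤ 2), one_div,
        inv_mul_cancel₀ hr.ne', Real.rpow_one]
    have hTmpow : (Tm+1) ^ (m-1) = 2 * (T k + 1) ^ (m-1) := by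
      rw [hTm1, Real.mul_rpow (Real.rpow_nonneg (by norm_num) _) hTk1'.le,
        h2pow (m-1) hm1]
    have hHdTm : K/(2*(m-1)) * (Tm+1) ^ (m-1) ≤ Hd H Tm := by
      have h := hB2 Tm ⟨hTkTm.le, hTmt.le⟩ hTmt
      rw [hc2def] at h
      rw [hTmpow] at h ⊢
      have e : K/(2*(m-1)) * (2*(T k + 1) ^ (m-1))
          = K/(m-1) * (2*(T k + 1) ^ (m-1)) - K/(m-1) * (T k + 1) ^ (m-1) := by
        field_simp
        ring
      rw [e]
      exact h
    -- Stage C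
    obtain ⟨c4, hc4def⟩ : ∃ x : ℝ, x = K/(2*(m-1)*m) := ⟨_, rfl⟩
    have hc4pos : 0 < c4 := by rw [hc4def]; positivity
    have hψ : ∀ s ∈ Icc (0:ℝ) t,
        HasDerivAt (fun s : ℝ => c4 * (s+1) ^ m - c4 * (Tm+1) ^ m)
          (K/(2*(m-1)) * (s+1) ^ (m-1)) s := by
      intro s hs
      have hs1 : (0:ℝ) < s + 1 := by linarith [hs.1]
      have h := ((hasDerivAt_shift_rpow m s hs1).const_mul c4).sub_const (c4 * (Tm+1) ^ m)
      refine h.congr_deriv ?_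
      rw [hc4def]
      field_simp
    have hψ' : ∀ s ∈ Icc (0:ℝ) t,
        HasDerivAt (fun s : ℝ => K/(2*(m-1)) * (s+1) ^ (m-1))
          (K/2 * (s+1) ^ (m-2)) s := by
      intro s hs
      have hs1 : (0:ℝ) < s + 1 := by linarith [hs.1]
      have h := (hasDerivAt_shift_rpow (m-1) s hs1).const_mul (K/(2*(m-1)))
      refine h.congr_deriv ?_
      rw [show m - 1 - 1 = m - 2 by ring]
      field_simp
    have hTmIcc : Tm ∈ Icc (0:ℝ) t := ⟨by linarith, hTmt.le⟩
    obtain ⟨hC1', _⟩ := compare H t ht0 hC2 _ _ _ hψ hψ'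
      Tm t (by linarith) hTmt.le le_rfl hTmt
      (by
        show c4 * (Tm+1) ^ m - c4 * (Tm+1) ^ m ≤ H Tm
        have := hA1 Tm hTmIcc
        linarith)
      (by
        show K/(2*(m-1)) * (Tm+1) ^ (m-1) ≤ Hd H Tm
        exact hHdTm)
      (by
        intro s hs
        have hs1 : (0:ℝ) < s + 1 := by linarith [hs.1, hTkTm]
        have hnn : (0:ℝ) ≤ (s+1) ^ (m-2) := Real.rpow_nonneg hs1.le _
        have h1 : K/2 * (s+1) ^ (m-2) ≤ K * (s+1) ^ (m-2) :=
          mul_le_mul_of_nonneg_right (by linarith) hnn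
        exact le_trans h1 (hddB s ⟨lt_trans hTkTm hs.1, hs.2⟩))
    have hψt : c4 * (t+1) ^ m - c4 * (Tm+1) ^ m ≤ H t := hC1' t ⟨hTmt.le, le_rfl⟩
    have h2m : (Tm+1) ^ m * 2 ≤ (t+1) ^ m := by
      have e : T (k+1) + 1 = 2 ^ (1/m) * (Tm+1) := by
        rw [hTm1, hTsucc, hradd]
        ring
      have h1 : 2 ^ (1/m) * (Tm+1) ≤ t + 1 := by linarith
      have h2 := Real.rpow_le_rpow (mul_nonneg (Real.rpow_nonneg (by norm_num) _) (by linarith : (0:ℝ) ≤ Tm+1)) h1 hm0.le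
      rw [Real.mul_rpow (Real.rpow_nonneg (by norm_num) _) (by linarith : (0:ℝ) ≤ Tm+1),
        h2pow m hm0] at h2
      linarith
    have htp1 : (0:ℝ) < t + 1 := by linarith
    have htp : (0:ℝ) < (t+1) ^ m := Real.rpow_pos_of_pos htp1 m
    have hfin1 : K/(4*(m-1)*m) * (t+1) ^ m ≤ H t := by
      have h3 : c4 * (Tm+1) ^ m ≤ c4 * ((t+1) ^ m / 2) :=
        mul_le_mul_of_nonneg_left (by linarith) hc4pos.le
      have e : K/(4*(m-1)*m) * (t+1) ^ m = c4 * (t+1) ^ m - c4 * ((t+1) ^ m / 2) := by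
        rw [hc4def]
        field_simp
        ring
      linarith
    have hqbk := hqb k hk
    have hm_b0 : m ≤ bb0 n p * p ^ k := hmdef ▸ hqbk.1
    have hm_b1 : m - 1 ≤ bb1 n p * p ^ k := by rw [hmdef]; exact hqbk.2
    have hpk : (0:ℝ) < p ^ k := pow_pos hp0 k
    have hprod : (m-1) * m ≤ bb0 n p * bb1 n p * p ^ (2*k) := by
      have h1 : (m-1) * m ≤ (bb1 n p * p ^ k) * (bb0 n p * p ^ k) :=
        mul_le_mul hm_b1 hm_b0 hm0.le (by positivity)
      have e : bb0 n p * bb1 n p * p ^ (2*k) = (bb1 n p * p ^ k) * (bb0 n p * p ^ k) := by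
        rw [two_mul, pow_add]
        ring
      linarith
    have hCk1 : C (k+1) ≤ K/(4*(m-1)*m) := by
      rw [hCrec k hk, ← hKdef]
      exact div_le_div_of_nonneg_left hKpos.le
        (by linarith only [mul_pos hm1 hm0]) (by linarith only [hprod])
    calc C (k+1) * (t+1) ^ (q (k+1)) = C (k+1) * (t+1) ^ m := by rw [hmdef]
      _ ≤ K/(4*(m-1)*m) * (t+1) ^ m := mul_le_mul_of_nonneg_right hCk1 htp.le
      _ ≤ H t := hfin1
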